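/- Let G be a group, V an n-dimensional vector space over a field k, and ρ: G → GL(V) a representation. If ρ is m-dense (i.e., the induced representation ∧^m ρ on ∧^m V is irreducible) for some 0 < m < n, then ρ is m-thick (i.e., for any subspaces V₁, V₂ of V with dim V₁ = m and dim V₂ = n−m, there exists g ∈ G with ρ(g)V₁ ⊕ V₂ = V). -/

import Mathlib

open Module ExteriorAlgebra

variable {k G V : Type*} [Field k] [AddCommGroup V] [Module k V] [Group G]

/-- A representation is `m`-thick (with `n = dim V`). -/
def IsMThick (ρ : G →* (V ≃ₗ[k] V)) (n m : ℕ) : Prop :=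
  ∀ V₁ V₂ : Submodule k V,
    Module.finrank k V₁ = m → Module.finrank k V₂ = n - m →
    ∃ g : G, IsCompl (V₁.map (ρ g : V →ₗ[k] V)) V₂

/-- Invariance of a subspace under the representation. -/
def RepInvariant (ρ : G →* (V ≃ₗ[k] V)) (W : Submodule k V) : Prop :=
  ∀ g : G, W.map (ρ g : V →ₗ[k] V) ≤ W

/-- Irreducibility of a representation. -/
def IsIrreducibleRep (ρ : G →* (V ≃ₗ[k] V)) : Prop :=
  Nontrivial V ∧ ∀ W : Submodule k V, RepInvariant ρ W → W = ⊥ ∨ W = ⊤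

/-- The induced action on the exterior algebra. -/
noncomputable def extAction (ρ : G →* (V ≃ₗ[k] V)) (g : G) :
    ExteriorAlgebra k V →ₗ[k] ExteriorAlgebra k V :=
  (ExteriorAlgebra.map (ρ g : V →ₗ[k] V)).toLinearMap

/-- A representation is `m`-dense if the induced representation on `⋀^m V` is irreducible. -/
def IsMDense (ρ : G →* (V ≃ₗ[k] V)) (m : ℕ) : Prop :=
  ∀ W : Submodule k (ExteriorAlgebra k V), W ≤ ⋀[k]^m V →
    (∀ g : G, W.map (extAction ρ g) ≤ W) → W = ⊥ ∨ W = ⋀[k]^m V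

/-- A subspace of `⋀^m V` is realizable if it contains a nonzero decomposable vector. -/
def IsRealizable (k : Type*) [Field k] {V : Type*} [AddCommGroup V] [Module k V]
    (m : ℕ) (W : Submodule k (ExteriorAlgebra k V)) : Prop :=
  ∃ v : Fin m → V, ExteriorAlgebra.ιMulti k m v ≠ 0 ∧ ExteriorAlgebra.ιMulti k m v ∈ W

/-- The perp of a subspace of `⋀^m V` inside `⋀^j V` with respect to the wedge pairing. -/
def wedgePerp (W : Submodule k (ExteriorAlgebra k V)) (j : ℕ) :
    Submodule k (ExteriorAlgebra k V) where
  carrier := {y | y ∈ ⋀[k]^j V ∧ ∀ x ∈ W, x * y = 0}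
  add_mem' := by
    rintro a b ⟨ha, ha'⟩ ⟨hb, hb'⟩
    exact ⟨add_mem ha hb, fun x hx => by rw [mul_add, ha' x hx, hb' x hx, add_zero]⟩
  zero_mem' := ⟨Submodule.zero_mem _, fun x _ => mul_zero x⟩
  smul_mem' := by
    rintro c a ⟨ha, ha'⟩
    exact ⟨Submodule.smul_mem _ c ha, fun x hx => by rw [mul_smul_comm, ha' x hx, smul_zero]⟩

lemma myιMulti_ne_zero {m : ℕ} {v : Fin m → V} (hv : LinearIndependent k v) :
    ExteriorAlgebra.ιMulti k m v ≠ 0 := by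
  obtain ⟨Wc, hWc⟩ := Submodule.exists_isCompl (Submodule.span k (Set.range v))
  set π := (Submodule.span k (Set.range v)).projectionOnto Wc hWc with hπ
  set b := Basis.span hv with hb
  set f : V [⋀^Fin m]→ₗ[k] k := b.det.compLinearMap π with hf
  have hfv : f v = 1 := by
    have hcomp : (fun i => π (v i)) = b := by
      funext i
      have hmem : v i ∈ Submodule.span k (Set.range v) :=
        Submodule.subset_span ⟨i, rfl⟩
      have : π (v i) = π ((⟨v i, hmem⟩ : Submodule.span k (Set.range v)) : V) := rfl
      rw [this, hπ, Submodule.projectionOnto_apply_left]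
      exact (Module.Basis.span_apply hv i).symm
    simp only [hf, AlternatingMap.compLinearMap_apply]
    rw [hcomp]
    exact b.det_self
  intro h
  have := ExteriorAlgebra.liftAlternating_apply_ιMulti (Pi.single m f) v
  rw [h, map_zero, Pi.single_eq_same, hfv] at this
  exact one_ne_zero this.symm

lemma myιMulti_mul {m p : ℕ} (v : Fin m → V) (w : Fin p → V) :
    (ExteriorAlgebra.ιMulti k m v : ExteriorAlgebra k V) *
      ExteriorAlgebra.ιMulti k p w = ExteriorAlgebra.ιMulti k (m + p) (Fin.append v w) := by
  rw [ιMulti_apply, ιMulti_apply, ιMulti_apply, ← List.prod_append, ← List.ofFn_fin_append]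
  congr 1
  apply congrArg
  funext i
  refine Fin.addCases (fun j => ?_) (fun j => ?_) i <;>
    simp [Fin.append_left, Fin.append_right]

lemma myAppend_eq_elim {m p : ℕ} (u : Fin m → V) (w : Fin p → V) :
    Fin.append u w = Sum.elim u w ∘ finSumFinEquiv.symm := by
  funext i
  refine Fin.addCases (fun j => ?_) (fun j => ?_) i <;>
    simp [Fin.append_left, Fin.append_right]

lemma myAppend_li_iff {m p : ℕ} (u : Fin m → V) (w : Fin p → V) :
    LinearIndependent k (Fin.append u w) ↔ LinearIndependent k (Sum.elim u w) := by
  rw [myAppend_eq_elim, linearIndependent_equiv]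

/-- m-dense implies m-thick. -/
theorem mdense_implies_mthick [FiniteDimensional k V] {n m : ℕ}
    (hn : Module.finrank k V = n) (hm0 : 0 < m) (hmn : m < n)
    (ρ : G →* (V ≃ₗ[k] V)) (hdense : IsMDense ρ m) :
    IsMThick ρ n m
 := by
  intro V₁ V₂ h1 h2
  have hmp : m + (n - m) = n := by omega
  -- bases of V₁ and V₂ as families in V
  let b₁ := finBasisOfFinrankEq k V₁ h1
  set v₁ : Fin m → V := fun i => (b₁ i : V) with hv₁def
  have hv₁li : LinearIndependent k v₁ :=
    b₁.linearIndependent.map' V₁.subtype V₁.ker_subtype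
  have hv₁span : Submodule.span k (Set.range v₁) = V₁ := by
    have : Set.range v₁ = V₁.subtype '' Set.range b₁ := by
      rw [← Set.range_comp]; rfl
    rw [this, ← Submodule.map_span, b₁.span_eq, Submodule.map_top, Submodule.range_subtype]
  let b₂ := finBasisOfFinrankEq k V₂ h2
  set w₂ : Fin (n - m) → V := fun i => (b₂ i : V) with hw₂def
  have hw₂li : LinearIndependent k w₂ :=
    b₂.linearIndependent.map' V₂.subtype V₂.ker_subtype
  have hw₂span : Submodule.span k (Set.range w₂) = V₂ := by
    have : Set.range w₂ = V₂.subtype '' Set.range b₂ := by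
      rw [← Set.range_comp]; rfl
    rw [this, ← Submodule.map_span, b₂.span_eq, Submodule.map_top, Submodule.range_subtype]
  -- a complement of V₂ and its basis
  obtain ⟨U, hU⟩ := Submodule.exists_isCompl V₂
  have hUrank : Module.finrank k U = m := by
    have := Submodule.finrank_add_eq_of_isCompl hU
    omega
  let bU := finBasisOfFinrankEq k U hUrank
  set u : Fin m → V := fun i => (bU i : V) with hudef
  have huli : LinearIndependent k u :=
    bU.linearIndependent.map' U.subtype U.ker_subtype
  have huspan : Submodule.span k (Set.range u) = U := by
    have : Set.range u = U.subtype '' Set.range bU := by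
      rw [← Set.range_comp]; rfl
    rw [this, ← Submodule.map_span, bU.span_eq, Submodule.map_top, Submodule.range_subtype]
  have happli : LinearIndependent k (Fin.append u w₂) := by
    rw [myAppend_li_iff]
    refine huli.sum_type hw₂li ?_
    rw [huspan, hw₂span]
    exact hU.symm.disjoint
  -- the invariant subspace
  set ω₁ : ExteriorAlgebra k V := ExteriorAlgebra.ιMulti k m v₁ with hω₁
  set ω₂ : ExteriorAlgebra k V := ExteriorAlgebra.ιMulti k (n - m) w₂ with hω₂
  set W : Submodule k (ExteriorAlgebra k V) :=
    Submodule.span k (Set.range fun g : G => extAction ρ g ω₁) with hWdef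
  have hact : ∀ g : G, extAction ρ g ω₁ =
      ExteriorAlgebra.ιMulti k m (fun i => ρ g (v₁ i)) := by
    intro g
    show ExteriorAlgebra.map (ρ g : V →ₗ[k] V) ω₁ = _
    rw [hω₁, ExteriorAlgebra.map_apply_ιMulti]
    rfl
  have hWle : W ≤ ⋀[k]^m V := by
    rw [hWdef, Submodule.span_le]
    rintro x ⟨g, rfl⟩
    show extAction ρ g ω₁ ∈ _
    rw [hact g]
    exact ExteriorAlgebra.ιMulti_range k m ⟨_, rfl⟩
  have hWinv : ∀ g : G, W.map (extAction ρ g) ≤ W := by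
    intro g
    rw [hWdef, Submodule.map_span, Submodule.span_le]
    rintro x ⟨y, ⟨g', rfl⟩, rfl⟩
    have hcomp : extAction ρ g (extAction ρ g' ω₁) = extAction ρ (g * g') ω₁ := by
      show ExteriorAlgebra.map _ (ExteriorAlgebra.map _ ω₁) = ExteriorAlgebra.map _ ω₁
      rw [← AlgHom.comp_apply, ExteriorAlgebra.map_comp_map]
      congr 1
      ext x
      simp
    rw [hcomp]
    exact Submodule.subset_span ⟨g * g', rfl⟩
  have hω₁ne : ω₁ ≠ 0 := myιMulti_ne_zero hv₁li
  have hω₁W : ω₁ ∈ W := by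
    have : extAction ρ 1 ω₁ = ω₁ := by
      show ExteriorAlgebra.map ((ρ 1 : V ≃ₗ[k] V) : V →ₗ[k] V) ω₁ = ω₁
      have : ((ρ 1 : V ≃ₗ[k] V) : V →ₗ[k] V) = LinearMap.id := by ext x; simp
      rw [this, ExteriorAlgebra.map_id]; rfl
    rw [← this]
    exact Submodule.subset_span ⟨1, rfl⟩
  have hW : W = ⋀[k]^m V := by
    refine (hdense W hWle hWinv).resolve_left ?_
    intro h
    rw [h] at hω₁W
    exact hω₁ne (Submodule.mem_bot k |>.mp hω₁W)
  -- the witness element of W pairing nontrivially with ω₂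
  have hxmem : ExteriorAlgebra.ιMulti k m u ∈ W := by
    rw [hW]
    exact ExteriorAlgebra.ιMulti_range k m ⟨u, rfl⟩
  have hxω₂ : ExteriorAlgebra.ιMulti k m u * ω₂ ≠ 0 := by
    rw [hω₂, myιMulti_mul]
    exact myιMulti_ne_zero happli
  obtain ⟨g, hg⟩ : ∃ g : G, extAction ρ g ω₁ * ω₂ ≠ 0 := by
    by_contra h
    push_neg at h
    have hker : W ≤ LinearMap.ker (LinearMap.mulRight k ω₂) := by
      rw [hWdef, Submodule.span_le]
      rintro x ⟨g, rfl⟩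
      exact LinearMap.mem_ker.mpr (h g)
    exact hxω₂ (hker hxmem)
  -- conclude
  set vg : Fin m → V := fun i => ρ g (v₁ i) with hvg
  have hgli : LinearIndependent k (Fin.append vg w₂) := by
    by_contra h
    apply hg
    rw [hact g, hω₂, myιMulti_mul]
    exact (ExteriorAlgebra.ιMulti k (m + (n - m))).map_linearDependent _ h
  have hsum : LinearIndependent k (Sum.elim vg w₂) := (myAppend_li_iff _ _).mp hgli
  obtain ⟨-, -, hdisj⟩ := linearIndependent_sum.mp hsum
  have hmap : V₁.map (ρ g : V →ₗ[k] V) = Submodule.span k (Set.range vg) := by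
    rw [← hv₁span, Submodule.map_span, ← Set.range_comp]
    rfl
  refine ⟨g, ?_⟩
  rw [hmap, ← hw₂span]
  constructor
  · exact hdisj
  · rw [codisjoint_iff, ← Submodule.span_union, ← Set.Sum.elim_range]
    haveI : Nonempty (Fin m ⊕ Fin (n - m)) := ⟨Sum.inl ⟨0, hm0⟩⟩
    refine hsum.span_eq_top_of_card_eq_finrank ?_
    simp [hn, hmp]
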